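/- Let V be a real inner product space, let u₁, u₂, n ∈ V be unit vectors with n orthogonal to both u₁ and u₂, and let β ∈ [0, π/4]. Define v₂ = (cos β) • u₂ + (sin β) • n. Then the angle between u₁ and v₂ is at least β. -/

import Mathlib

open Real InnerProductGeometry

/-- Lemma 2 of the paper: if a unit segment `u₁` lies in a plane and a
unit segment `v₂ = cos β • u₂ + sin β • n` (with `u₂` in the plane and
`n` a unit normal) forms angle `β ≤ π/4` with its projection onto the
plane, then the angle between `u₁` and `v₂` is at least `β`. -/
theorem angle_with_lifted_ge
    {V : Type*} [NormedAddCommGroup V] [InnerProductSpace ℝ V]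
    (u₁ u₂ n : V) (hu₁ : ‖u₁‖ = 1) (hu₂ : ‖u₂‖ = 1) (hn : ‖n‖ = 1)
    (hn₁ : inner ℝ u₁ n = (0 : ℝ)) (hn₂ : inner ℝ u₂ n = (0 : ℝ))
    (β : ℝ) (hβ : β ∈ Set.Icc 0 (π / 4)) :
    β ≤ angle u₁ (cos β • u₂ + sin β • n) := by
  obtain ⟨hβ0, hβ4⟩ := hβ
  set v := cos β • u₂ + sin β • n with hv
  have hvnorm : ‖v‖ = 1 := by
    have h1 : ‖v‖ ^ 2 = 1 := by
      rw [hv, ← real_inner_self_eq_norm_sq]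
      simp [inner_add_add_self, real_inner_smul_left, real_inner_smul_right,
        hn₂, real_inner_self_eq_norm_sq, hu₂, hn, real_inner_comm u₂ n]
      left
      have h0 : inner ℝ (cos β • u₂) (sin β • n) = (0:ℝ) := by
        rw [real_inner_smul_left, real_inner_smul_right, hn₂]; ring
      have h2 := norm_add_sq_eq_norm_sq_add_norm_sq_real h0
      rw [norm_smul, norm_smul, hu₂, hn, Real.norm_eq_abs, Real.norm_eq_abs] at h2
      nlinarith [sin_sq_add_cos_sq β, sq_abs (cos β), sq_abs (sin β),
        norm_nonneg (cos β • u₂ + sin β • n)]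
    nlinarith [norm_nonneg v]
  have hinner : (inner ℝ u₁ v : ℝ) = cos β * inner ℝ u₁ u₂ := by
    rw [hv]
    simp [inner_add_right, real_inner_smul_right, hn₁]
  have hCS : (inner ℝ u₁ u₂ : ℝ) ≤ 1 := by
    have := real_inner_le_norm u₁ u₂
    rwa [hu₁, hu₂, one_mul] at this
  have hcos0 : 0 ≤ cos β := cos_nonneg_of_mem_Icc
    ⟨by linarith [pi_pos.le], by linarith [pi_pos.le]⟩
  have hle : (inner ℝ u₁ v : ℝ) ≤ cos β := by
    rw [hinner]
    nlinarith
  have hlo : (-1 : ℝ) ≤ inner ℝ u₁ v := by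
    have := abs_real_inner_le_norm u₁ v
    rw [hu₁, hvnorm, one_mul] at this
    linarith [abs_le.mp this]
  rw [angle, hu₁, hvnorm]
  calc β = arccos (cos β) := (arccos_cos hβ0 (by linarith [pi_pos])).symm
    _ ≤ arccos (inner ℝ u₁ v / (1 * 1)) := by
        rw [one_mul, div_one]
        unfold arccos
        have := monotone_arcsin hle
        linarith
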